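/- For every m ∈ ℕ, every rational direction ν ∈ S¹∩ℚ² and all real θ < λ, the infimal minimizers coincide: u_{m,ν}^{θ,λ} = u_{1,ν}^{θ,λ} (absence of symmetry breaking). -/

import Mathlib

open scoped ENNReal Classical

/-- The canonical embedding of `ℤ³` into Euclidean `ℝ³`. -/
noncomputable def toR3 (x : ℤ × ℤ × ℤ) : EuclideanSpace ℝ (Fin 3) :=
  (WithLp.equiv 2 (Fin 3 → ℝ)).symm ![(x.1 : ℝ), (x.2.1 : ℝ), (x.2.2 : ℝ)]

/-- The canonical embedding of `ℤ²` into Euclidean `ℝ²`. -/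
noncomputable def toR2 (x : ℤ × ℤ) : EuclideanSpace ℝ (Fin 2) :=
  (WithLp.equiv 2 (Fin 2 → ℝ)).symm ![(x.1 : ℝ), (x.2 : ℝ)]

/-- Membership in the slab `ℤ²_M = ℤ² × {0,…,M}`. -/
def inSlab (M : ℕ) (x : ℤ × ℤ × ℤ) : Prop := 0 ≤ x.2.2 ∧ x.2.2 ≤ (M : ℤ)

/-- The energy `E_M(u,Γ) = ∑_{x ∈ Γ_M} ∑_{y ∈ ℤ²_M} c(x-y)|u(x)-u(y)|`, valued in `[0,∞]`. -/
noncomputable def energyM (M : ℕ) (c : EuclideanSpace ℝ (Fin 3) → ℝ)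
    (u : ℤ × ℤ × ℤ → ℝ) (Γ : Set (ℤ × ℤ)) : ℝ≥0∞ :=
  ∑' x : ℤ × ℤ × ℤ, ∑' y : ℤ × ℤ × ℤ,
    if (x.1, x.2.1) ∈ Γ ∧ inSlab M x ∧ inSlab M y then
      ENNReal.ofReal (c (toR3 x - toR3 y) * |u x - u y|) else 0

/-- A direction `ν ∈ S¹` is rational if both its components are rational numbers. -/
def IsRationalDir (ν : EuclideanSpace ℝ (Fin 2)) : Prop :=
  ∃ a b : ℚ, ν 0 = (a : ℝ) ∧ ν 1 = (b : ℝ)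

/-- The `ℤ`-module `ℤ_ν = {z ∈ ℤ² : ⟨z,ν⟩ = 0}`. -/
def Znu (ν : EuclideanSpace ℝ (Fin 2)) : Set (ℤ × ℤ) :=
  {z | @inner ℝ _ _ (toR2 z) ν = 0}

/-- The set `mℤ_ν` of `m`-fold multiples of elements of `ℤ_ν`. -/
def mZnu (m : ℕ) (ν : EuclideanSpace ℝ (Fin 2)) : Set (ℤ × ℤ) :=
  {z | ∃ w ∈ Znu ν, z = ((m : ℤ) * w.1, (m : ℤ) * w.2)}

/-- `F` is a fundamental domain of `ℤ²/mℤ_ν`: every `z ∈ ℤ²` is uniquely `z₁ + z₂` with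
`z₁ ∈ mℤ_ν` and `z₂ ∈ F`. -/
def IsFundDomain (m : ℕ) (ν : EuclideanSpace ℝ (Fin 2)) (F : Set (ℤ × ℤ)) : Prop :=
  ∀ z : ℤ × ℤ, ∃! w : ℤ × ℤ, w ∈ F ∧ z - w ∈ mZnu m ν

/-- `u : ℤ²_M → {±1}` is `(m,ν)`-periodic. -/
def PeriodicMN (M m : ℕ) (ν : EuclideanSpace ℝ (Fin 2)) (u : ℤ × ℤ × ℤ → ℝ) : Prop :=
  ∀ x : ℤ × ℤ × ℤ, inSlab M x → ∀ z ∈ Znu ν,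
    u (x.1 + (m : ℤ) * z.1, x.2.1 + (m : ℤ) * z.2, x.2.2) = u x

/-- The class `A_{m,ν}^{θ,λ}` of `(m,ν)`-periodic `{±1}`-configurations with `u = 1` below
level `θ` and `u = -1` above level `λ` (levels measured by `⟨P₂·,ν⟩`). -/
def AdmissibleA (M m : ℕ) (ν : EuclideanSpace ℝ (Fin 2)) (θ lam : ℝ)
    (u : ℤ × ℤ × ℤ → ℝ) : Prop :=
  (∀ x, inSlab M x → u x = 1 ∨ u x = -1) ∧
  PeriodicMN M m ν u ∧
  (∀ x, inSlab M x → @inner ℝ _ _ (toR2 (x.1, x.2.1)) ν < θ → u x = 1) ∧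
  (∀ x, inSlab M x → lam < @inner ℝ _ _ (toR2 (x.1, x.2.1)) ν → u x = -1)

/-- Membership in the class `M_{m,ν}^{θ,λ}` of minimizers of `E_M(·,F_{m,ν})` in
`A_{m,ν}^{θ,λ}`. -/
def IsMinA (M : ℕ) (c : EuclideanSpace ℝ (Fin 3) → ℝ) (m : ℕ)
    (ν : EuclideanSpace ℝ (Fin 2)) (θ lam : ℝ) (F : Set (ℤ × ℤ))
    (u : ℤ × ℤ × ℤ → ℝ) : Prop :=
  AdmissibleA M m ν θ lam u ∧
  ∀ v, AdmissibleA M m ν θ lam v → energyM M c u F ≤ energyM M c v F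

/-- `u` is the infimal minimizer `u_{m,ν}^{θ,λ}`: the pointwise least element (on the slab)
of the class of minimizers `M_{m,ν}^{θ,λ}`. -/
def IsInfMinA (M : ℕ) (c : EuclideanSpace ℝ (Fin 3) → ℝ) (m : ℕ)
    (ν : EuclideanSpace ℝ (Fin 2)) (θ lam : ℝ) (F : Set (ℤ × ℤ))
    (u : ℤ × ℤ × ℤ → ℝ) : Prop :=
  IsMinA M c m ν θ lam F u ∧
  ∀ v, IsMinA M c m ν θ lam F v → ∀ x, inSlab M x → u x ≤ v x


/-! ### Auxiliary machinery for the proof -/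

section NSBAux

lemma nsb_inner_toR2 (z : ℤ × ℤ) (ν : EuclideanSpace ℝ (Fin 2)) :
    @inner ℝ _ _ (toR2 z) ν = (z.1 : ℝ) * ν 0 + (z.2 : ℝ) * ν 1 := by
  simp [toR2, PiLp.inner_apply, Fin.sum_univ_two, RCLike.inner_apply, conj_trivial]; ring

lemma nsb_mem_Znu (z : ℤ × ℤ) (ν : EuclideanSpace ℝ (Fin 2)) :
    z ∈ Znu ν ↔ (z.1 : ℝ) * ν 0 + (z.2 : ℝ) * ν 1 = 0 := by
  rw [Znu, Set.mem_setOf_eq, nsb_inner_toR2]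

variable {ν : EuclideanSpace ℝ (Fin 2)}

lemma nsb_Znu_zero : (0, 0) ∈ Znu ν := by simp [nsb_mem_Znu]

lemma nsb_Znu_neg {z : ℤ × ℤ} (h : z ∈ Znu ν) : (-z.1, -z.2) ∈ Znu ν := by
  rw [nsb_mem_Znu] at *; push_cast; linarith

lemma nsb_Znu_add {z w : ℤ × ℤ} (h : z ∈ Znu ν) (h' : w ∈ Znu ν) :
    (z.1 + w.1, z.2 + w.2) ∈ Znu ν := by
  rw [nsb_mem_Znu] at *; push_cast; linarith

lemma nsb_Znu_smul (k : ℤ) {z : ℤ × ℤ} (h : z ∈ Znu ν) : (k * z.1, k * z.2) ∈ Znu ν := by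
  rw [nsb_mem_Znu] at *; push_cast
  calc (k:ℝ) * z.1 * ν 0 + k * z.2 * ν 1 = k * ((z.1:ℝ) * ν 0 + z.2 * ν 1) := by ring
  _ = 0 := by rw [h]; ring

lemma nsb_mZnu_zero (m : ℕ) : (0 : ℤ × ℤ) ∈ mZnu m ν := ⟨(0,0), nsb_Znu_zero, by simp [Prod.ext_iff]⟩

lemma nsb_mZnu_neg {m : ℕ} {g : ℤ × ℤ} (h : g ∈ mZnu m ν) : -g ∈ mZnu m ν := by
  obtain ⟨w, hw, rfl⟩ := h
  exact ⟨(-w.1, -w.2), nsb_Znu_neg hw, by simp [Prod.ext_iff]⟩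

lemma nsb_mZnu_sub {m : ℕ} {g g' : ℤ × ℤ} (h : g ∈ mZnu m ν) (h' : g' ∈ mZnu m ν) :
    g - g' ∈ mZnu m ν := by
  obtain ⟨w, hw, rfl⟩ := h; obtain ⟨w', hw', rfl⟩ := h'
  refine ⟨(w.1 - w'.1, w.2 - w'.2), ?_, by simp [Prod.ext_iff]; constructor <;> ring⟩
  have := nsb_Znu_add hw (nsb_Znu_neg hw'); simpa [sub_eq_add_neg] using this

lemma nsb_mZnu_one : mZnu 1 ν = Znu ν := by
  ext z; constructor
  · rintro ⟨w, hw, rfl⟩; simpa using hw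
  · intro hz; exact ⟨z, hz, by simp⟩

lemma nsb_mZnu_one' {z : ℤ × ℤ} : z ∈ mZnu 1 ν ↔ z ∈ Znu ν := by rw [nsb_mZnu_one]

/-- generator of `Znu` for a rational unit direction -/
lemma nsb_gen (hν : ‖ν‖ = 1) (hrat : IsRationalDir ν) :
    ∃ z₀ : ℤ × ℤ, z₀ ∈ Znu ν ∧ z₀ ≠ 0 ∧ ∀ z ∈ Znu ν, ∃ k : ℤ, z = (k * z₀.1, k * z₀.2) := by
  obtain ⟨a, b, ha, hb⟩ := hrat
  have hν0 : ν ≠ 0 := by intro h; rw [h] at hν; simp at hν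
  have hab : a ≠ 0 ∨ b ≠ 0 := by
    by_contra h
    push_neg at h
    apply hν0
    ext i
    fin_cases i <;> simp [ha, hb, h.1, h.2]
  set A : ℤ := a.num * b.den with hA
  set B : ℤ := b.num * a.den with hB
  have hABne : ¬(A = 0 ∧ B = 0) := by
    rintro ⟨h1, h2⟩
    rcases hab with h | h
    · exact h (by simpa [hA, Rat.num_eq_zero, b.den_nz] using mul_eq_zero.mp h1)
    · exact h (by simpa [hB, Rat.num_eq_zero, a.den_nz] using mul_eq_zero.mp h2)
  have key : ∀ p q : ℤ, ((p, q) ∈ Znu ν ↔ p * A + q * B = 0) := by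
    intro p q
    rw [nsb_mem_Znu]
    simp only [ha, hb]
    rw [Rat.cast_def, Rat.cast_def]
    have hden1 : (a.den : ℝ) ≠ 0 := by exact_mod_cast a.den_nz
    have hden2 : (b.den : ℝ) ≠ 0 := by exact_mod_cast b.den_nz
    constructor
    · intro h
      have : (p : ℝ) * A + q * B = 0 := by
        field_simp at h
        push_cast [hA, hB]
        nlinarith [h]
      exact_mod_cast this
    · intro h
      have h' : (p : ℝ) * A + q * B = 0 := by exact_mod_cast h
      push_cast [hA, hB] at h'
      field_simp
      nlinarith [h']
  set g : ℕ := Int.gcd A B with hg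
  have hgne : (g : ℤ) ≠ 0 := by
    simp only [hg, ne_eq, Nat.cast_eq_zero, Int.gcd_eq_zero_iff]
    tauto
  set A' : ℤ := A / g with hA'
  set B' : ℤ := B / g with hB'
  have hAfac : A = g * A' := (Int.mul_ediv_cancel' (Int.gcd_dvd_left A B)).symm
  have hBfac : B = g * B' := (Int.mul_ediv_cancel' (Int.gcd_dvd_right A B)).symm
  have hcop : Int.gcd A' B' = 1 := by
    apply Int.gcd_div_gcd_div_gcd
    rcases Nat.eq_zero_or_pos g with h | h
    · exact absurd h (by simpa [hg, Int.gcd_eq_zero_iff] using hABne)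
    · exact h
  refine ⟨(B', -A'), ?_, ?_, ?_⟩
  · rw [key]; rw [hAfac, hBfac]; ring
  · intro h
    rw [Prod.ext_iff] at h
    simp at h
    exact hABne ⟨by rw [hAfac, h.2]; ring, by rw [hBfac, h.1]; ring⟩
  · rintro ⟨p, q⟩ hz
    rw [key] at hz
    rw [hAfac, hBfac] at hz
    have hz' : p * A' + q * B' = 0 := by
      have : (g : ℤ) * (p * A' + q * B') = 0 := by linarith [hz]
      rcases mul_eq_zero.mp this with h | h
      · exact absurd h hgne
      · exact h
    by_cases hB'0 : B' = 0
    · have hA'1 : A' = 1 ∨ A' = -1 := by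
        have : A'.natAbs = 1 := by simpa [hB'0, Int.gcd] using hcop
        rcases Int.natAbs_eq A' with h | h <;> rw [this] at h <;> [left; right] <;> simpa using h
      have hp : p = 0 := by
        rcases hA'1 with h | h <;> simp [h, hB'0] at hz' <;> omega
      refine ⟨-q * A', ?_⟩
      rcases hA'1 with h | h <;> simp [Prod.ext_iff, hp, hB'0, h]
    · have hdvd : B' ∣ p := by
        have h1 : B' ∣ p * A' := ⟨-q, by linarith [hz']⟩
        exact Int.dvd_of_dvd_mul_left_of_gcd_one h1 (by rwa [Int.gcd_comm])
      obtain ⟨k, hk⟩ := hdvd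
      refine ⟨k, ?_⟩
      have hq : q = -(k * A') := by
        have : B' * (k * A' + q) = 0 := by rw [hk] at hz'; ring_nf; linarith [hz']
        rcases mul_eq_zero.mp this with h | h
        · exact absurd h hB'0
        · linarith [h]
      simp only [Prod.ext_iff]
      exact ⟨by rw [hk]; ring, by rw [hq]; ring⟩

/-- shift equivalence of `ℤ³` by a 2D vector -/
def nsbShift (g : ℤ × ℤ) : ℤ × ℤ × ℤ ≃ ℤ × ℤ × ℤ where
  toFun y := (y.1 + g.1, y.2.1 + g.2, y.2.2)
  invFun y := (y.1 - g.1, y.2.1 - g.2, y.2.2)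
  left_inv y := by simp [Prod.ext_iff]
  right_inv y := by simp [Prod.ext_iff]

lemma nsb_toR3_sub2 (a b : ℤ × ℤ × ℤ) (g : ℤ × ℤ) :
    toR3 (a.1 + g.1, a.2.1 + g.2, a.2.2) - toR3 (b.1 + g.1, b.2.1 + g.2, b.2.2)
      = toR3 a - toR3 b := by
  ext i
  simp only [toR3, PiLp.sub_apply, PiLp.toLp_apply]
  fin_cases i <;> simp

/-- inner sum of the energy, with slab conditions -/
noncomputable def nsbRow (M : ℕ) (c : EuclideanSpace ℝ (Fin 3) → ℝ) (u : ℤ × ℤ × ℤ → ℝ)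
    (x : ℤ × ℤ × ℤ) : ℝ≥0∞ :=
  ∑' y : ℤ × ℤ × ℤ, if inSlab M x ∧ inSlab M y then
      ENNReal.ofReal (c (toR3 x - toR3 y) * |u x - u y|) else 0

/-- column sum: total energy contribution of a site `z ∈ ℤ²` -/
noncomputable def nsbCol (M : ℕ) (c : EuclideanSpace ℝ (Fin 3) → ℝ) (u : ℤ × ℤ × ℤ → ℝ)
    (z : ℤ × ℤ) : ℝ≥0∞ :=
  ∑' t : ℤ, nsbRow M c u (z.1, z.2, t)

/-- the auxiliary equivalence `(ℤ×ℤ)×ℤ ≃ ℤ×ℤ×ℤ` -/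
def nsbE : (ℤ × ℤ) × ℤ ≃ ℤ × ℤ × ℤ where
  toFun p := (p.1.1, p.1.2, p.2)
  invFun x := ((x.1, x.2.1), x.2.2)
  left_inv _ := rfl
  right_inv _ := rfl

variable {M m : ℕ} {c : EuclideanSpace ℝ (Fin 3) → ℝ} {u : ℤ × ℤ × ℤ → ℝ}

lemma nsb_energy_eq (M : ℕ) (c : EuclideanSpace ℝ (Fin 3) → ℝ) (u : ℤ × ℤ × ℤ → ℝ)
    (Γ : Set (ℤ × ℤ)) : energyM M c u Γ = ∑' z : Γ, nsbCol M c u z := by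
  have h1 : energyM M c u Γ = ∑' x : ℤ × ℤ × ℤ,
      (if (x.1, x.2.1) ∈ Γ then nsbRow M c u x else 0) := by
    rw [energyM]
    congr 1; funext x
    by_cases h : (x.1, x.2.1) ∈ Γ
    · simp only [h, if_true, nsbRow]
      congr 1; funext y
      by_cases h2 : inSlab M x ∧ inSlab M y <;> simp [h, h2]
    · simp [h]
  rw [h1, ← nsbE.tsum_eq, ENNReal.tsum_prod']
  rw [tsum_subtype]
  congr 1; funext z
  rcases z with ⟨z1, z2⟩
  by_cases h : (z1, z2) ∈ Γ
  · simp [nsbE, Set.indicator, h, nsbCol]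
  · simp [nsbE, Set.indicator, h]

lemma nsb_col_periodic (hu : PeriodicMN M m ν u) {g : ℤ × ℤ} (hg : g ∈ mZnu m ν) (z : ℤ × ℤ) :
    nsbCol M c u (z.1 + g.1, z.2 + g.2) = nsbCol M c u z := by
  obtain ⟨w, hw, rfl⟩ := hg
  apply tsum_congr; intro t
  rw [nsbRow, nsbRow, ← Equiv.tsum_eq (nsbShift ((m:ℤ) * w.1, (m:ℤ) * w.2))]
  apply tsum_congr; intro y
  show (if inSlab M (z.1 + _*w.1, z.2 + _*w.2, t) ∧ inSlab M (y.1 + _*w.1, y.2.1 + _*w.2, y.2.2)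
      then _ else _) = _
  by_cases hc1 : inSlab M (z.1, z.2, t) ∧ inSlab M y
  · rw [if_pos, if_pos hc1]
    · congr 2
      · exact congrArg c (nsb_toR3_sub2 (z.1, z.2, t) y ((m:ℤ)*w.1, (m:ℤ)*w.2))
      · rw [show ((nsbShift ((m:ℤ)*w.1, (m:ℤ)*w.2)) y) = ((y.1 + (m:ℤ)*w.1, y.2.1 + (m:ℤ)*w.2, y.2.2) : ℤ×ℤ×ℤ) from rfl,
             hu (z.1, z.2, t) hc1.1 w hw, hu y hc1.2 w hw]
    · exact ⟨hc1.1, hc1.2⟩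
  · rw [if_neg, if_neg hc1]
    exact fun h => hc1 ⟨h.1, h.2⟩

/-- the shifted configuration `x ↦ u(x - g)` -/
def nsbTau (g : ℤ × ℤ) (u : ℤ × ℤ × ℤ → ℝ) : ℤ × ℤ × ℤ → ℝ :=
  fun x => u (x.1 - g.1, x.2.1 - g.2, x.2.2)

lemma nsb_col_tau (g : ℤ × ℤ) (z : ℤ × ℤ) :
    nsbCol M c (nsbTau g u) z = nsbCol M c u (z.1 - g.1, z.2 - g.2) := by
  apply tsum_congr; intro t
  rw [nsbRow, nsbRow, ← Equiv.tsum_eq (nsbShift g)]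
  apply tsum_congr; intro y
  have hcond : (inSlab M (((z.1 - g.1, z.2 - g.2).1, (z.1 - g.1, z.2 - g.2).2, t) : ℤ×ℤ×ℤ)
      ∧ inSlab M y) ↔ (inSlab M ((z.1, z.2, t) : ℤ×ℤ×ℤ) ∧ inSlab M y) := Iff.rfl
  by_cases hc : inSlab M ((z.1, z.2, t) : ℤ × ℤ × ℤ) ∧ inSlab M y
  · rw [if_pos (show inSlab M ((z.1, z.2, t) : ℤ×ℤ×ℤ) ∧ inSlab M ((nsbShift g) y)
          from ⟨hc.1, hc.2⟩), if_pos (hcond.mpr hc)]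
    congr 2
    · have h3 := nsb_toR3_sub2 (z.1 - g.1, z.2 - g.2, t) y g
      simp only [sub_add_cancel] at h3
      exact congrArg c h3
    · show |u (z.1 - g.1, z.2 - g.2, t) - u ((y.1 + g.1) - g.1, (y.2.1 + g.2) - g.2, y.2.2)| = _
      simp only [add_sub_cancel_right]
  · rw [if_neg (show ¬(inSlab M ((z.1, z.2, t) : ℤ×ℤ×ℤ) ∧ inSlab M ((nsbShift g) y))
          from fun h => hc ⟨h.1, h.2⟩), if_neg (fun h => hc (hcond.mp h))]

lemma nsb_energy_tau (g : ℤ × ℤ) (F : Set (ℤ × ℤ)) :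
    energyM M c (nsbTau g u) F = energyM M c u {w | (w.1 + g.1, w.2 + g.2) ∈ F} := by
  rw [nsb_energy_eq, nsb_energy_eq]
  let e : {w : ℤ × ℤ // w ∈ {w : ℤ × ℤ | (w.1 + g.1, w.2 + g.2) ∈ F}} ≃ {z : ℤ × ℤ // z ∈ F} :=
    { toFun := fun w => ⟨(w.1.1 + g.1, w.1.2 + g.2), w.2⟩
      invFun := fun z => ⟨(z.1.1 - g.1, z.1.2 - g.2), by
        show ((z.1.1 - g.1) + g.1, (z.1.2 - g.2) + g.2) ∈ F
        simpa [sub_add_cancel] using z.2⟩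
      left_inv := fun w => by
        apply Subtype.ext; simp [Prod.ext_iff]
      right_inv := fun z => by
        apply Subtype.ext; simp [Prod.ext_iff] }
  calc ∑' z : {z : ℤ × ℤ // z ∈ F}, nsbCol M c (nsbTau g u) z.1
      = ∑' z : {z : ℤ × ℤ // z ∈ F}, nsbCol M c u (z.1.1 - g.1, z.1.2 - g.2) :=
        tsum_congr (fun z => nsb_col_tau g z.1)
    _ = ∑' w : {w : ℤ × ℤ // w ∈ {w : ℤ × ℤ | (w.1 + g.1, w.2 + g.2) ∈ F}}, nsbCol M c u w.1 := by
        rw [← Equiv.tsum_eq e (fun z : {z : ℤ × ℤ // z ∈ F} => nsbCol M c u (z.1.1 - g.1, z.1.2 - g.2))]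
        apply tsum_congr; intro w
        show nsbCol M c u ((w.1.1 + g.1) - g.1, (w.1.2 + g.2) - g.2) = nsbCol M c u w.1
        simp only [add_sub_cancel_right]

lemma nsb_fund_shift {F : Set (ℤ × ℤ)} (hF : IsFundDomain m ν F) (g : ℤ × ℤ) :
    IsFundDomain m ν {w | (w.1 + g.1, w.2 + g.2) ∈ F} := by
  intro z
  obtain ⟨w, ⟨hwF, hwm⟩, huniq⟩ := hF (z.1 + g.1, z.2 + g.2)
  refine ⟨(w.1 - g.1, w.2 - g.2), ⟨?_, ?_⟩, ?_⟩
  · show ((w.1 - g.1) + g.1, (w.2 - g.2) + g.2) ∈ F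
    simpa [sub_add_cancel] using hwF
  · have : z - (w.1 - g.1, w.2 - g.2) = (z.1 + g.1, z.2 + g.2) - w := by
      simp [Prod.ext_iff]; constructor <;> ring
    rw [this]; exact hwm
  · rintro y ⟨hyF, hym⟩
    have h1 : y.1 + g.1 - w.1 = 0 ∧ y.2 + g.2 - w.2 = 0 := by
      have := huniq (y.1 + g.1, y.2 + g.2) ⟨hyF, by
        have : ((z.1 + g.1, z.2 + g.2) : ℤ × ℤ) - (y.1 + g.1, y.2 + g.2) = z - y := by
          simp [Prod.ext_iff]
        rw [this]; exact hym⟩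
      rw [Prod.ext_iff] at this
      simp at this
      omega
    have hy1 : y.1 = w.1 - g.1 := by omega
    have hy2 : y.2 = w.2 - g.2 := by omega
    simp [Prod.ext_iff, hy1, hy2]

lemma nsb_tsum_fund (h : ℤ × ℤ → ℝ≥0∞)
    (hinv : ∀ z : ℤ × ℤ, ∀ g ∈ mZnu m ν, h (z.1 + g.1, z.2 + g.2) = h z)
    {F F' : Set (ℤ × ℤ)} (hF : IsFundDomain m ν F) (hF' : IsFundDomain m ν F') :
    ∑' z : F, h z = ∑' z : F', h z := by
  have key : ∀ a b : ℤ × ℤ, a - b ∈ mZnu m ν → h a = h b := by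
    intro a b hd
    have := hinv b (a.1 - b.1, a.2 - b.2) (by
      have : ((a.1 - b.1, a.2 - b.2) : ℤ × ℤ) = a - b := by simp [Prod.ext_iff]
      rw [this]; exact hd)
    simpa using this
  let e : {z : ℤ × ℤ // z ∈ F} ≃ {z : ℤ × ℤ // z ∈ F'} :=
    { toFun := fun z => ⟨(hF' z).choose, (hF' z).choose_spec.1.1⟩
      invFun := fun z => ⟨(hF z).choose, (hF z).choose_spec.1.1⟩
      left_inv := fun z => by
        apply Subtype.ext
        have h1 := (hF' z).choose_spec.1.2
        exact ((hF ((hF' z).choose)).choose_spec.2 z.1 ⟨z.2, by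
          have h2 : (hF' z.1).choose - z.1 = -((z.1 : ℤ × ℤ) - (hF' z.1).choose) := by ring
          rw [h2]; exact nsb_mZnu_neg h1⟩).symm
      right_inv := fun z => by
        apply Subtype.ext
        have h1 := (hF z).choose_spec.1.2
        exact ((hF' ((hF z).choose)).choose_spec.2 z.1 ⟨z.2, by
          have h2 : (hF z.1).choose - z.1 = -((z.1 : ℤ × ℤ) - (hF z.1).choose) := by ring
          rw [h2]; exact nsb_mZnu_neg h1⟩).symm }
  rw [← Equiv.tsum_eq e (fun z => h z)]
  apply tsum_congr; intro z
  show h z.1 = h ((hF' z.1).choose)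
  exact key z.1 _ (hF' z.1).choose_spec.1.2

lemma nsb_energy_scale (hν : ‖ν‖ = 1) (hrat : IsRationalDir ν) (hm : 0 < m)
    {Fm F1 : Set (ℤ × ℤ)} (hFm : IsFundDomain m ν Fm) (hF1 : IsFundDomain 1 ν F1)
    (hu : PeriodicMN M 1 ν u) :
    energyM M c u Fm = (m : ℝ≥0∞) * energyM M c u F1 := by
  obtain ⟨z₀, hz₀mem, hz₀ne, hgen⟩ := nsb_gen hν hrat
  have hmne : (m : ℤ) ≠ 0 := by exact_mod_cast hm.ne'
  have hmpos : (0 : ℤ) < m := by exact_mod_cast hm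
  have key : ∀ a b : ℤ × ℤ, a - b ∈ Znu ν → nsbCol M c u a = nsbCol M c u b := by
    intro a b hd
    have := nsb_col_periodic (m := 1) (c := c) hu (g := (a.1 - b.1, a.2 - b.2)) (nsb_mZnu_one'.mpr (by
      have he : ((a.1 - b.1, a.2 - b.2) : ℤ × ℤ) = a - b := by simp [Prod.ext_iff]
      rw [he]; exact hd)) b
    simpa using this
  have hz₀inj : ∀ k k' : ℤ, ((k * z₀.1, k * z₀.2) : ℤ × ℤ) = (k' * z₀.1, k' * z₀.2) → k = k' := by
    intro k k' hkk
    rw [Prod.ext_iff] at hkk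
    have hne : z₀.1 ≠ 0 ∨ z₀.2 ≠ 0 := by
      by_contra hcon; push_neg at hcon
      exact hz₀ne (Prod.ext_iff.mpr ⟨hcon.1, hcon.2⟩)
    rcases hne with hne | hne
    · exact mul_right_cancel₀ hne hkk.1
    · exact mul_right_cancel₀ hne hkk.2
  -- representative maps
  set r1 : ℤ × ℤ → ℤ × ℤ := fun z => (hF1 z).choose with hr1
  have hr1F : ∀ z, r1 z ∈ F1 := fun z => (hF1 z).choose_spec.1.1
  have hr1d : ∀ z, z - r1 z ∈ Znu ν := fun z =>
    nsb_mZnu_one'.mp (hF1 z).choose_spec.1.2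
  set idx : ℤ × ℤ → ℤ := fun z => (hgen (z - r1 z) (hr1d z)).choose with hidxdef
  have hidx : ∀ z, z - r1 z = ((idx z) * z₀.1, (idx z) * z₀.2) :=
    fun z => (hgen (z - r1 z) (hr1d z)).choose_spec
  set rm : ℤ × ℤ → ℤ × ℤ := fun z => (hFm z).choose with hrm
  have hrmF : ∀ z, rm z ∈ Fm := fun z => (hFm z).choose_spec.1.1
  have hrmd : ∀ z, z - rm z ∈ mZnu m ν := fun z => (hFm z).choose_spec.1.2
  have hrmu : ∀ z w, w ∈ Fm → z - w ∈ mZnu m ν → w = rm z :=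
    fun z w h1 h2 => (hFm z).choose_spec.2 w ⟨h1, h2⟩
  have hr1u : ∀ z w, w ∈ F1 → z - w ∈ Znu ν → w = r1 z :=
    fun z w h1 h2 => (hF1 z).choose_spec.2 w ⟨h1, nsb_mZnu_one'.mpr h2⟩
  -- decomposition of `rm a` differences
  have hdiff : ∀ a : ℤ × ℤ, ∃ s : ℤ, a - rm a = ((m:ℤ) * (s * z₀.1), (m:ℤ) * (s * z₀.2)) := by
    intro a
    obtain ⟨v, hv, hav⟩ := hrmd a
    obtain ⟨s, hs⟩ := hgen v hv
    exact ⟨s, by rw [hav, hs]⟩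
  let e : (Fin m × {w : ℤ × ℤ // w ∈ F1}) ≃ {z : ℤ × ℤ // z ∈ Fm} :=
    { toFun := fun p =>
        ⟨rm (p.2.1.1 + ((p.1 : ℕ) : ℤ) * z₀.1, p.2.1.2 + ((p.1 : ℕ) : ℤ) * z₀.2), hrmF _⟩
      invFun := fun z =>
        (⟨((idx z.1) % m).toNat, by
          have h1 : 0 ≤ (idx z.1) % (m:ℤ) := Int.emod_nonneg _ hmne
          have h2 : (idx z.1) % (m:ℤ) < m := Int.emod_lt_of_pos _ hmpos
          omega⟩, ⟨r1 z.1, hr1F z.1⟩)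
      left_inv := fun p => by
        obtain ⟨k, w⟩ := p
        set kk : ℤ := ((k : ℕ) : ℤ) with hkk
        set a : ℤ × ℤ := (w.1.1 + kk * z₀.1, w.1.2 + kk * z₀.2) with ha
        obtain ⟨s, hs⟩ := hdiff a
        rw [Prod.ext_iff] at hs
        simp only [Prod.fst_sub, Prod.snd_sub] at hs
        have ha1 : a.1 = w.1.1 + kk * z₀.1 := by rw [ha]
        have ha2 : a.2 = w.1.2 + kk * z₀.2 := by rw [ha]
        have hzc : rm a - w.1 = ((kk - m * s) * z₀.1, (kk - m * s) * z₀.2) := by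
          rw [Prod.ext_iff]
          simp only [Prod.fst_sub, Prod.snd_sub]
          exact ⟨by linear_combination ha1 - hs.1, by linear_combination ha2 - hs.2⟩
        have hw : w.1 = r1 (rm a) := by
          apply hr1u
          · exact w.2
          · rw [hzc]; exact nsb_Znu_smul _ hz₀mem
        have hj : idx (rm a) = kk - m * s := by
          apply hz₀inj
          rw [← hidx (rm a), ← hw, hzc]
        show (⟨((idx (rm a)) % m).toNat, _⟩, ⟨r1 (rm a), _⟩) = (k, w)
        rw [Prod.ext_iff]
        constructor
        · apply Fin.ext
          show ((idx (rm a)) % m).toNat = (k : ℕ)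
          rw [hj, show kk - (m:ℤ) * s = kk + (m:ℤ) * (-s) by ring, Int.add_mul_emod_self_left]
          have hklt : kk < (m:ℤ) := by rw [hkk]; exact_mod_cast k.2
          have hkge : 0 ≤ kk := by positivity
          rw [Int.emod_eq_of_lt hkge hklt]
          omega
        · exact Subtype.ext hw.symm
      right_inv := fun z => by
        apply Subtype.ext
        set j : ℤ := idx z.1 with hj
        set w : ℤ × ℤ := r1 z.1 with hw
        have hwz := hidx z.1
        rw [Prod.ext_iff] at hwz
        simp only [Prod.fst_sub, Prod.snd_sub] at hwz
        set kk : ℤ := ((((idx z.1) % m).toNat : ℕ) : ℤ) with hkk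
        have hkkj : kk = j % m := by
          simp only [hkk, hj]
          have h1 : 0 ≤ (idx z.1) % (m:ℤ) := Int.emod_nonneg _ hmne
          omega
        show rm (w.1 + kk * z₀.1, w.2 + kk * z₀.2) = z.1
        symm
        apply hrmu
        · exact z.2
        · refine ⟨((-(j / m)) * z₀.1, (-(j / m)) * z₀.2), nsb_Znu_smul _ hz₀mem, ?_⟩
          have hdm := Int.mul_ediv_add_emod j m
          rw [Prod.ext_iff]
          simp only [Prod.fst_sub, Prod.snd_sub]
          constructor
          · show w.1 + kk * z₀.1 - z.1.1 = (m : ℤ) * (-(j / m) * z₀.1)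
            have h1 : z.1.1 - w.1 = j * z₀.1 := hwz.1
            linear_combination (-1 : ℤ) * h1 + z₀.1 * hdm + z₀.1 * hkkj
          · show w.2 + kk * z₀.2 - z.1.2 = (m : ℤ) * (-(j / m) * z₀.2)
            have h2 : z.1.2 - w.2 = j * z₀.2 := hwz.2
            linear_combination (-1 : ℤ) * h2 + z₀.2 * hdm + z₀.2 * hkkj }
  rw [nsb_energy_eq, nsb_energy_eq]
  have hcongr : ∀ p : Fin m × {w : ℤ × ℤ // w ∈ F1}, nsbCol M c u ((e p : {z : ℤ × ℤ // z ∈ Fm}) : ℤ × ℤ) = nsbCol M c u p.2.1 := by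
    intro p
    apply key
    set kk : ℤ := ((p.1 : ℕ) : ℤ) with hkk
    set a : ℤ × ℤ := (p.2.1.1 + kk * z₀.1, p.2.1.2 + kk * z₀.2) with ha
    obtain ⟨s, hs⟩ := hdiff a
    rw [Prod.ext_iff] at hs
    simp only [Prod.fst_sub, Prod.snd_sub] at hs
    show rm a - p.2.1 ∈ Znu ν
    have ha1 : a.1 = p.2.1.1 + kk * z₀.1 := by rw [ha]
    have ha2 : a.2 = p.2.1.2 + kk * z₀.2 := by rw [ha]
    have hzc : rm a - p.2.1 = ((kk - m * s) * z₀.1, (kk - m * s) * z₀.2) := by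
      rw [Prod.ext_iff]
      simp only [Prod.fst_sub, Prod.snd_sub]
      exact ⟨by linear_combination ha1 - hs.1, by linear_combination ha2 - hs.2⟩
    rw [hzc]; exact nsb_Znu_smul _ hz₀mem
  calc ∑' z : {z : ℤ × ℤ // z ∈ Fm}, nsbCol M c u z.1
      = ∑' p : Fin m × {w : ℤ × ℤ // w ∈ F1}, nsbCol M c u ((e p : {z : ℤ × ℤ // z ∈ Fm}) : ℤ × ℤ) :=
        (Equiv.tsum_eq e (fun z : {z : ℤ × ℤ // z ∈ Fm} => nsbCol M c u z.1)).symm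
    _ = ∑' p : Fin m × {w : ℤ × ℤ // w ∈ F1}, nsbCol M c u p.2.1 := tsum_congr hcongr
    _ = ∑ _k : Fin m, ∑' w : {w : ℤ × ℤ // w ∈ F1}, nsbCol M c u w.1 := by
        rw [ENNReal.tsum_prod']
        exact tsum_fintype _
    _ = (m : ℝ≥0∞) * ∑' w : {w : ℤ × ℤ // w ∈ F1}, nsbCol M c u w.1 := by
        rw [Finset.sum_const, Finset.card_univ, Fintype.card_fin, nsmul_eq_mul]

lemma nsb_adm_tau {θ lam : ℝ} {g : ℤ × ℤ} (hg : g ∈ Znu ν)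
    (hu : AdmissibleA M m ν θ lam u) : AdmissibleA M m ν θ lam (nsbTau g u) := by
  have hinner : ∀ x1 x2 : ℤ, @inner ℝ _ _ (toR2 (x1 - g.1, x2 - g.2)) ν
      = @inner ℝ _ _ (toR2 (x1, x2)) ν := by
    intro x1 x2
    have hg' := (nsb_mem_Znu g ν).mp hg
    rw [nsb_inner_toR2, nsb_inner_toR2]
    push_cast
    linear_combination -hg'
  obtain ⟨hval, hper, hlow, hhigh⟩ := hu
  refine ⟨?_, ?_, ?_, ?_⟩
  · intro x hx; exact hval _ hx
  · intro x hx z hz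
    show u (x.1 + (m:ℤ) * z.1 - g.1, x.2.1 + (m:ℤ) * z.2 - g.2, x.2.2) = _
    have heq : ((x.1 + (m:ℤ) * z.1 - g.1, x.2.1 + (m:ℤ) * z.2 - g.2, x.2.2) : ℤ × ℤ × ℤ)
        = ((x.1 - g.1) + (m:ℤ) * z.1, (x.2.1 - g.2) + (m:ℤ) * z.2, x.2.2) := by
      simp [Prod.ext_iff]; constructor <;> ring
    rw [heq]
    exact hper (x.1 - g.1, x.2.1 - g.2, x.2.2) hx z hz
  · intro x hx hin
    apply hlow (x.1 - g.1, x.2.1 - g.2, x.2.2) hx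
    show @inner ℝ _ _ (toR2 (x.1 - g.1, x.2.1 - g.2)) ν < θ
    rw [hinner]; exact hin
  · intro x hx hin
    apply hhigh (x.1 - g.1, x.2.1 - g.2, x.2.2) hx
    show lam < @inner ℝ _ _ (toR2 (x.1 - g.1, x.2.1 - g.2)) ν
    rw [hinner]; exact hin

lemma nsb_adm_1m {θ lam : ℝ} (hu : AdmissibleA M 1 ν θ lam u) :
    AdmissibleA M m ν θ lam u := by
  refine ⟨hu.1, ?_, hu.2.2.1, hu.2.2.2⟩
  intro x hx z hz
  have hz' : (((m : ℤ) * z.1, (m : ℤ) * z.2) : ℤ × ℤ) ∈ Znu ν := nsb_Znu_smul m hz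
  have := hu.2.1 x hx _ hz'
  simpa using this

end NSBAux

/-- **Absence of symmetry breaking** (Lemma A.5): for every `m ≥ 1`, every rational
direction `ν ∈ S¹∩ℚ²` and all `θ < λ`, the infimal minimizers of the `(m,ν)`-periodic and
the `(1,ν)`-periodic problems coincide on the slab `ℤ²_M`. -/
theorem no_symmetry_breaking
    (L Cbar c0 : ℝ) (hL : 0 < L) (hCbar : 0 < Cbar) (hc0 : 0 < c0)
    (c : EuclideanSpace ℝ (Fin 3) → ℝ)
    (hc_nonneg : ∀ z, 0 ≤ c z)
    (hc_bd : ∀ z, c z ≤ Cbar)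
    (hc_range : ∀ z : EuclideanSpace ℝ (Fin 3), L ≤ ‖z‖ → c z = 0)
    (hc_coer : ∀ i : Fin 3,
      c0 ≤ c (EuclideanSpace.single i (1 : ℝ)) ∧ c0 ≤ c (-EuclideanSpace.single i (1 : ℝ)))
    (M m : ℕ) (hm : 0 < m)
    (ν : EuclideanSpace ℝ (Fin 2)) (hν : ‖ν‖ = 1) (hrat : IsRationalDir ν)
    (θ lam : ℝ) (hθlam : θ < lam)
    (Fm F1 : Set (ℤ × ℤ)) (hFm : IsFundDomain m ν Fm) (hF1 : IsFundDomain 1 ν F1)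
    (um u1 : ℤ × ℤ × ℤ → ℝ)
    (hum : IsInfMinA M c m ν θ lam Fm um)
    (hu1 : IsInfMinA M c 1 ν θ lam F1 u1) :
    ∀ x, inSlab M x → um x = u1 x := by
  have humAdm : AdmissibleA M m ν θ lam um := hum.1.1
  -- Step 1: the infimal minimizer `um` is invariant under all `ℤ_ν`-translations
  have hstep : ∀ g ∈ Znu ν, ∀ x, inSlab M x → um x ≤ nsbTau g um x := by
    intro g hg
    apply hum.2
    refine ⟨nsb_adm_tau hg humAdm, fun v hv => ?_⟩
    calc energyM M c (nsbTau g um) Fm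
        = energyM M c um {w | (w.1 + g.1, w.2 + g.2) ∈ Fm} := nsb_energy_tau g Fm
      _ = energyM M c um Fm := by
          rw [nsb_energy_eq, nsb_energy_eq]
          exact nsb_tsum_fund _ (fun z g' hg' => nsb_col_periodic humAdm.2.1 hg' z)
            (nsb_fund_shift hFm g) hFm
      _ ≤ energyM M c v Fm := hum.1.2 v hv
  have hper1 : PeriodicMN M 1 ν um := by
    intro x hx z hz
    simp only [Nat.cast_one, one_mul]
    have h1 := hstep z hz (x.1 + z.1, x.2.1 + z.2, x.2.2) hx
    have h2 := hstep (-z.1, -z.2) (nsb_Znu_neg hz) x hx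
    apply le_antisymm
    · simpa [nsbTau] using h1
    · simpa [nsbTau, sub_neg_eq_add] using h2
  have umAdm1 : AdmissibleA M 1 ν θ lam um := ⟨humAdm.1, hper1, humAdm.2.2.1, humAdm.2.2.2⟩
  have hm0 : (m : ℝ≥0∞) ≠ 0 := by exact_mod_cast hm.ne'
  have hmtop : (m : ℝ≥0∞) ≠ ⊤ := ENNReal.natCast_ne_top m
  -- Step 2: `um` is a minimizer of the 1-periodic problem
  have humMin1 : IsMinA M c 1 ν θ lam F1 um := by
    refine ⟨umAdm1, fun v hv => ?_⟩
    have h1 : energyM M c um Fm ≤ energyM M c v Fm := hum.1.2 v (nsb_adm_1m hv)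
    rw [nsb_energy_scale hν hrat hm hFm hF1 hper1,
        nsb_energy_scale hν hrat hm hFm hF1 hv.2.1] at h1
    exact (ENNReal.mul_le_mul_iff_right hm0 hmtop).mp h1
  have hle1 : ∀ x, inSlab M x → u1 x ≤ um x := hu1.2 um humMin1
  -- Step 3: `u1` is a minimizer of the m-periodic problem
  have hu1Minm : IsMinA M c m ν θ lam Fm u1 := by
    refine ⟨nsb_adm_1m hu1.1.1, fun v hv => ?_⟩
    calc energyM M c u1 Fm
        = (m : ℝ≥0∞) * energyM M c u1 F1 := nsb_energy_scale hν hrat hm hFm hF1 hu1.1.1.2.1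
      _ ≤ (m : ℝ≥0∞) * energyM M c um F1 := mul_le_mul_right (hu1.1.2 um umAdm1) _
      _ = energyM M c um Fm := (nsb_energy_scale hν hrat hm hFm hF1 hper1).symm
      _ ≤ energyM M c v Fm := hum.1.2 v hv
  have hle2 : ∀ x, inSlab M x → um x ≤ u1 x := hum.2 u1 hu1Minm
  intro x hx
  exact le_antisymm (hle2 x hx) (hle1 x hx)
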